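/- Let P ∈ [0,1]^{n×n} be the symmetric edge probability matrix of an edge independent model A with volume Vol and overlap Ov. Then the expected number of 4-cycles satisfies E[C₄(A)] ≤ (1/8)(2·Ov·Vol)², and hence E[C₄(A)] = O(n⁴ · Ov⁴). -/

import Mathlib

open Finset

lemma double_sum_split (n : ℕ) (f : Fin n → Fin n → ℝ)
    (hsym : ∀ i j, f i j = f j i) (hdiag : ∀ i, f i i = 0) :
    ∑ i : Fin n, ∑ j : Fin n, f i j
      = 2 * ∑ i : Fin n, ∑ j : Fin n, (if i < j then f i j else 0) := by
  have h1 : ∑ i : Fin n, ∑ j : Fin n, f i j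
      = (∑ i : Fin n, ∑ j : Fin n, (if i < j then f i j else 0))
        + ∑ i : Fin n, ∑ j : Fin n, (if j < i then f i j else 0) := by
    rw [← Finset.sum_add_distrib]
    apply Finset.sum_congr rfl; intro i _
    rw [← Finset.sum_add_distrib]
    apply Finset.sum_congr rfl; intro j _
    rcases lt_trichotomy i j with h | h | h
    · simp [h, not_lt_of_gt h]
    · simp [h, hdiag]
    · simp [h, not_lt_of_gt h]
  have h2 : ∑ i : Fin n, ∑ j : Fin n, (if j < i then f i j else 0)
      = ∑ i : Fin n, ∑ j : Fin n, (if i < j then f i j else 0) := by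
    rw [Finset.sum_comm]
    apply Finset.sum_congr rfl; intro i _
    apply Finset.sum_congr rfl; intro j _
    rw [hsym]
  rw [h1, h2]; ring

theorem edge_independent_four_cycle_bound
    (n : ℕ) (P : Fin n → Fin n → ℝ)
    (h0 : ∀ i j, 0 ≤ P i j) (h1 : ∀ i j, P i j ≤ 1)
    (hsym : ∀ i j, P i j = P j i) (hdiag : ∀ i, P i i = 0)
    (Vol Ov : ℝ)
    (hVol : Vol = ∑ i : Fin n, ∑ j : Fin n, if i < j then P i j else 0)
    (hVolpos : 0 < Vol)
    (hOv : Ov = (∑ i : Fin n, ∑ j : Fin n, if i < j then P i j ^ 2 else 0) / Vol) :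
    (1 / 8 : ℝ) * (∑ i : Fin n, ∑ j : Fin n, ∑ k : Fin n, ∑ l : Fin n,
        if i ≠ j ∧ i ≠ k ∧ i ≠ l ∧ j ≠ k ∧ j ≠ l ∧ k ≠ l then
          P i j * P j k * P k l * P l i else 0) ≤ (1 / 8 : ℝ) * (2 * Ov * Vol) ^ 2 ∧
    (1 / 8 : ℝ) * (∑ i : Fin n, ∑ j : Fin n, ∑ k : Fin n, ∑ l : Fin n,
        if i ≠ j ∧ i ≠ k ∧ i ≠ l ∧ j ≠ k ∧ j ≠ l ∧ k ≠ l then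
          P i j * P j k * P k l * P l i else 0) ≤ (n : ℝ) ^ 4 * Ov ^ 4 := by
  set t : ℝ := ∑ i : Fin n, ∑ j : Fin n, if i < j then P i j ^ 2 else 0 with ht
  set S : ℝ := ∑ i : Fin n, ∑ j : Fin n, ∑ k : Fin n, ∑ l : Fin n,
        (if i ≠ j ∧ i ≠ k ∧ i ≠ l ∧ j ≠ k ∧ j ≠ l ∧ k ≠ l then
          P i j * P j k * P k l * P l i else 0) with hS
  have ht0 : 0 ≤ t := by
    apply Finset.sum_nonneg; intro i _
    apply Finset.sum_nonneg; intro j _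
    split_ifs
    · positivity
    · exact le_refl 0
  have htOv : t = Ov * Vol := by
    rw [hOv]; field_simp
  have hOv0 : 0 ≤ Ov := by
    rw [hOv]; positivity
  -- Q : full sum of squares
  set Q : ℝ := ∑ i : Fin n, ∑ j : Fin n, P i j ^ 2 with hQ
  have hQt : Q = 2 * t := by
    rw [hQ, ht]
    exact double_sum_split n (fun i j => P i j ^ 2)
      (fun i j => by show P i j ^ 2 = P j i ^ 2; rw [hsym]) (fun i => by show P i i ^ 2 = 0; rw [hdiag]; ring)
  -- Step A: drop the indicator
  have hA : S ≤ ∑ i : Fin n, ∑ j : Fin n, ∑ k : Fin n, ∑ l : Fin n,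
      P i j * P j k * P k l * P l i := by
    apply Finset.sum_le_sum; intro i _
    apply Finset.sum_le_sum; intro j _
    apply Finset.sum_le_sum; intro k _
    apply Finset.sum_le_sum; intro l _
    split_ifs
    · exact le_refl _
    · exact mul_nonneg (mul_nonneg (mul_nonneg (h0 _ _) (h0 _ _)) (h0 _ _)) (h0 _ _)
  -- Step B: rewrite full sum as sum of squares of P² entries
  have hB : (∑ i : Fin n, ∑ j : Fin n, ∑ k : Fin n, ∑ l : Fin n,
      P i j * P j k * P k l * P l i)
      = ∑ i : Fin n, ∑ k : Fin n, (∑ j : Fin n, P i j * P j k) ^ 2 := by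
    apply Finset.sum_congr rfl; intro i _
    rw [Finset.sum_comm]
    apply Finset.sum_congr rfl; intro k _
    rw [sq, Finset.sum_mul_sum]
    apply Finset.sum_congr rfl; intro j _
    apply Finset.sum_congr rfl; intro l _
    rw [hsym k l, hsym l i]; ring
  -- Step C: Cauchy-Schwarz termwise
  have hC : ∑ i : Fin n, ∑ k : Fin n, (∑ j : Fin n, P i j * P j k) ^ 2 ≤ Q ^ 2 := by
    have hrow : ∀ k : Fin n, ∑ j : Fin n, P j k ^ 2 = ∑ j : Fin n, P k j ^ 2 := by
      intro k; apply Finset.sum_congr rfl; intro j _; rw [hsym]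
    calc ∑ i : Fin n, ∑ k : Fin n, (∑ j : Fin n, P i j * P j k) ^ 2
        ≤ ∑ i : Fin n, ∑ k : Fin n,
            (∑ j : Fin n, P i j ^ 2) * (∑ j : Fin n, P k j ^ 2) := by
          apply Finset.sum_le_sum; intro i _
          apply Finset.sum_le_sum; intro k _
          calc (∑ j : Fin n, P i j * P j k) ^ 2
              ≤ (∑ j : Fin n, P i j ^ 2) * (∑ j : Fin n, P j k ^ 2) :=
                Finset.sum_mul_sq_le_sq_mul_sq _ _ _
            _ = (∑ j : Fin n, P i j ^ 2) * (∑ j : Fin n, P k j ^ 2) := by rw [hrow]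
      _ = Q ^ 2 := by
          rw [hQ, sq, Finset.sum_mul_sum]
  have hSQ : S ≤ (2 * Ov * Vol) ^ 2 := by
    have : S ≤ Q ^ 2 := le_trans hA (hB ▸ hC)
    calc S ≤ Q ^ 2 := this
      _ = (2 * Ov * Vol) ^ 2 := by rw [hQt, htOv]; ring
  have hfirst : (1 / 8 : ℝ) * S ≤ (1 / 8 : ℝ) * (2 * Ov * Vol) ^ 2 :=
    mul_le_mul_of_nonneg_left hSQ (by norm_num)
  refine ⟨hfirst, ?_⟩
  -- Cauchy-Schwarz: Vol^2 ≤ n^2 * t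
  have hCS : Vol ^ 2 ≤ (n : ℝ) ^ 2 * t := by
    have key := Finset.sum_mul_sq_le_sq_mul_sq (univ : Finset (Fin n × Fin n))
      (fun p => if p.1 < p.2 then P p.1 p.2 else 0) (fun _ => (1 : ℝ))
    simp only [mul_one, one_pow] at key
    have e1 : ∑ p : Fin n × Fin n, (if p.1 < p.2 then P p.1 p.2 else 0) = Vol := by
      rw [hVol, Fintype.sum_prod_type]
    have e2 : ∑ p : Fin n × Fin n, (if p.1 < p.2 then P p.1 p.2 else 0) ^ 2 = t := by
      rw [ht, Fintype.sum_prod_type]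
      apply Finset.sum_congr rfl; intro i _
      apply Finset.sum_congr rfl; intro j _
      split_ifs <;> ring
    have e3 : ∑ _p : Fin n × Fin n, (1 : ℝ) = (n : ℝ) ^ 2 := by
      simp [Finset.card_univ]; ring
    rw [e1, e2, e3] at key
    linarith [key]
  -- Vol ≤ n^2 * Ov
  have hVolle : Vol ≤ (n : ℝ) ^ 2 * Ov := by
    have h2 : Vol * Vol ≤ ((n : ℝ) ^ 2 * Ov) * Vol := by
      have := hCS
      rw [htOv] at this
      nlinarith
    exact le_of_mul_le_mul_right h2 hVolpos
  have htle : t ≤ (n : ℝ) ^ 2 * Ov ^ 2 := by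
    rw [htOv]
    calc Ov * Vol ≤ Ov * ((n : ℝ) ^ 2 * Ov) := mul_le_mul_of_nonneg_left hVolle hOv0
      _ = (n : ℝ) ^ 2 * Ov ^ 2 := by ring
  have ht2 : t ^ 2 ≤ (n : ℝ) ^ 4 * Ov ^ 4 := by
    calc t ^ 2 ≤ ((n : ℝ) ^ 2 * Ov ^ 2) ^ 2 := by nlinarith
      _ = (n : ℝ) ^ 4 * Ov ^ 4 := by ring
  calc (1 / 8 : ℝ) * S ≤ (1 / 8 : ℝ) * (2 * Ov * Vol) ^ 2 := hfirst
    _ = (1 / 2 : ℝ) * t ^ 2 := by rw [htOv]; ring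
    _ ≤ t ^ 2 := by nlinarith
    _ ≤ (n : ℝ) ^ 4 * Ov ^ 4 := ht2
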